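/- Let d ≥ 2 and q′ ≥ 2 be integers and let B be a real parameter with 0 ≤ B < (d+1−2q′)/(d+1). Then there exists exactly one real number x > 1 satisfying x·(q′ + (B+q′−1)·x^d) = B + q′ − 1 + q′·x^d. -/

import Mathlib

lemma qsum_lt_aux (x y : ℝ) (hx : 1 < x) (hy : 1 < y) (m : ℕ) :
    ∑ j ∈ Finset.range (m + 2), y ^ j * x ^ (m + 1 - j) <
      ∑ j ∈ Finset.range (m + 2), (x * y) ^ j := by
  have hx1 : (1:ℝ) ≤ x := hx.le
  have hy1 : (1:ℝ) ≤ y := hy.le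
  rw [← sub_pos, ← Finset.sum_sub_distrib]
  set g : ℕ → ℝ := fun j => (x * y) ^ j - y ^ j * x ^ (m + 1 - j) with hg
  have hrefl : ∑ j ∈ Finset.range (m+2), g (m + 1 - j) = ∑ j ∈ Finset.range (m+2), g j := by
    have := Finset.sum_range_reflect g (m+2)
    simpa [show ∀ j, m + 2 - 1 - j = m + 1 - j from fun j => by omega] using this
  have hterm : ∀ j ∈ Finset.range (m+2),
      g j + g (m + 1 - j) = (x ^ j - x ^ (m+1-j)) * (y ^ j - y ^ (m+1-j)) := by
    intro j hj
    rw [Finset.mem_range] at hj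
    have h1 : m + 1 - (m + 1 - j) = j := by omega
    simp only [hg, h1, mul_pow]
    ring
  have hpos : 0 < ∑ j ∈ Finset.range (m+2), (g j + g (m + 1 - j)) := by
    apply Finset.sum_pos'
    · intro j hj
      rw [hterm j hj]
      rcases le_total j (m + 1 - j) with hle | hle
      · exact mul_nonneg_of_nonpos_of_nonpos (sub_nonpos.2 (pow_le_pow_right₀ hx1 hle))
          (sub_nonpos.2 (pow_le_pow_right₀ hy1 hle))
      · exact mul_nonneg (sub_nonneg.2 (pow_le_pow_right₀ hx1 hle))
          (sub_nonneg.2 (pow_le_pow_right₀ hy1 hle))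
    · refine ⟨0, Finset.mem_range.2 (by omega), ?_⟩
      rw [hterm 0 (Finset.mem_range.2 (by omega))]
      simp only [pow_zero, Nat.sub_zero]
      have h1 : (1:ℝ) < x ^ (m+1) := one_lt_pow₀ hx (by omega)
      have h2 : (1:ℝ) < y ^ (m+1) := one_lt_pow₀ hy (by omega)
      nlinarith
  have h2 : (2:ℝ) * ∑ j ∈ Finset.range (m+2), g j
      = ∑ j ∈ Finset.range (m+2), (g j + g (m+1-j)) := by
    rw [Finset.sum_add_distrib, hrefl]; ring
  linarith

/-- in the non-uniqueness regime 0 ≤ B < (d+1−2q′)/(d+1), the equation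
x(q′ + (B+q′−1)x^d) = B + q′ − 1 + q′ x^d has exactly one real solution x > 1. -/
theorem potts_half_half_fixpoint_unique
    (d q' : ℕ) (hd : 2 ≤ d) (hq : 2 ≤ q')
    (B : ℝ) (hB0 : 0 ≤ B) (hB1 : B < ((d : ℝ) + 1 - 2 * (q' : ℝ)) / ((d : ℝ) + 1)) :
    ∃! x : ℝ, 1 < x ∧
      x * ((q' : ℝ) + (B + (q' : ℝ) - 1) * x ^ d) = B + (q' : ℝ) - 1 + (q' : ℝ) * x ^ d := by
  obtain ⟨e, rfl⟩ : ∃ e, d = e + 2 := ⟨d - 2, by omega⟩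
  set c : ℝ := B + (q' : ℝ) - 1 with hcdef
  have hq2 : (2:ℝ) ≤ (q' : ℝ) := by exact_mod_cast hq
  have hq'pos : (0:ℝ) < (q' : ℝ) := by linarith
  have hc1 : (1:ℝ) ≤ c := by rw [hcdef]; linarith
  have hc0 : (0:ℝ) < c := by linarith
  -- key numeric inequality : c*(e+3) < q'*(e+1)
  have hcast : ((e + 2 : ℕ) : ℝ) = (e : ℝ) + 2 := by push_cast; ring
  have hBe : B * ((e:ℝ) + 3) < (e:ℝ) + 3 - 2 * (q' : ℝ) := by
    rw [hcast] at hB1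
    have h3 : (0:ℝ) < (e:ℝ) + 3 := by positivity
    have := (lt_div_iff₀ (a := B) (b := (e:ℝ) + 3 - 2 * (q' : ℝ)) h3).mp (by rw [show (e:ℝ) + 3 = (e:ℝ) + 2 + 1 by ring]; exact hB1)
    linarith
  have hkey : c * ((e:ℝ) + 3) < (q' : ℝ) * ((e:ℝ) + 1) := by nlinarith
  -- equation ↔ P x = 0
  have hE : ∀ x : ℝ,
      (x * ((q' : ℝ) + c * x ^ (e+2)) = c + (q' : ℝ) * x ^ (e+2)) ↔
      (c * (x ^ (e+3) - 1) - (q' : ℝ) * (x ^ (e+2) - x) = 0) := by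
    intro x
    constructor <;> intro h <;> linear_combination h
  -- the auxiliary polynomial (quotient by (x-1))
  set S1 : ℝ → ℝ := fun x => ∑ i ∈ Finset.range (e+3), x ^ i with hS1
  set S2 : ℝ → ℝ := fun x => ∑ i ∈ Finset.range (e+1), x ^ i with hS2
  set f : ℝ → ℝ := fun x => c * S1 x - (q' : ℝ) * (x * S2 x) with hf
  have hfac : ∀ x : ℝ, f x * (x - 1) = c * (x ^ (e+3) - 1) - (q' : ℝ) * (x ^ (e+2) - x) := by
    intro x
    have g1 := geom_sum_mul x (e+3)
    have g2 := geom_sum_mul x (e+1)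
    simp only [hf, hS1, hS2]
    linear_combination c * g1 - (q' : ℝ) * x * g2
  have hcont : Continuous f := by
    apply Continuous.sub
    · exact continuous_const.mul (continuous_finset_sum _ fun i _ => continuous_pow i)
    · exact continuous_const.mul (continuous_id.mul (continuous_finset_sum _ fun i _ => continuous_pow i))
  have hf1 : f 1 < 0 := by
    have e1 : S1 1 = (e:ℝ) + 3 := by simp [hS1]
    have e2 : S2 1 = (e:ℝ) + 1 := by simp [hS2]
    simp only [hf, e1, e2, one_mul]
    linarith
  set M : ℝ := (q' : ℝ) * ((e:ℝ) + 1) + 1 with hM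
  have hM1 : (1:ℝ) ≤ M := by nlinarith
  have hMpos : (0:ℝ) < M := by linarith
  have hfM : 0 < f M := by
    have p1 : M ^ (e+2) ≤ S1 M := by
      apply Finset.single_le_sum (f := fun i => M ^ i)
      · intro i _; positivity
      · exact Finset.mem_range.2 (by omega)
    have p2 : S2 M ≤ ((e:ℝ) + 1) * M ^ e := by
      have := Finset.sum_le_card_nsmul (Finset.range (e+1)) (fun i => M ^ i) (M ^ e)
        (fun i hi => pow_le_pow_right₀ hM1 (by simp [Finset.mem_range] at hi; omega))
      simpa [Finset.card_range, nsmul_eq_mul] using this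
    have step : c * M ^ (e+2) - (q' : ℝ) * (M * (((e:ℝ) + 1) * M ^ e)) ≤ f M := by
      simp only [hf]
      gcongr
    have hcm : 1 ≤ c * M - (q' : ℝ) * ((e:ℝ) + 1) := by nlinarith
    have hrw : c * M ^ (e+2) - (q' : ℝ) * (M * (((e:ℝ) + 1) * M ^ e))
        = (c * M - (q' : ℝ) * ((e:ℝ) + 1)) * M ^ (e+1) := by ring
    have hp : (0:ℝ) < M ^ (e+1) := by positivity
    nlinarith
  -- existence via IVT
  have hivt := intermediate_value_Icc hM1 hcont.continuousOn
  have h0mem : (0:ℝ) ∈ Set.Icc (f 1) (f M) := ⟨hf1.le, hfM.le⟩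
  obtain ⟨x0, hx0mem, hfx0⟩ := hivt h0mem
  have hx0gt : 1 < x0 := by
    rcases lt_or_eq_of_le hx0mem.1 with h | h
    · exact h
    · exfalso; rw [← h] at hfx0; linarith
  have hEx0 : x0 * ((q' : ℝ) + c * x0 ^ (e+2)) = c + (q' : ℝ) * x0 ^ (e+2) := by
    rw [hE x0, ← hfac x0, hfx0, zero_mul]
  -- uniqueness
  have key : ∀ a b : ℝ, 1 < a → 1 < b → a < b →
      c * (a ^ (e+3) - 1) - (q' : ℝ) * (a ^ (e+2) - a) = 0 →
      c * (b ^ (e+3) - 1) - (q' : ℝ) * (b ^ (e+2) - b) = 0 → False := by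
    intro a b ha hb hab Pa Pb
    have hab1 : (1:ℝ) < a * b := by nlinarith
    have hg1 : (∑ i ∈ Finset.range (e+2), (a*b) ^ i) * (a*b - 1) = (a*b) ^ (e+2) - 1 :=
      geom_sum_mul (a*b) (e+2)
    have hg2 : (∑ i ∈ Finset.range (e+2), b ^ i * a ^ (e+1-i)) * (b - a)
        = b ^ (e+2) - a ^ (e+2) := by simpa using geom_sum₂_mul b a (e+2)
    have QS := qsum_lt_aux a b ha hb e
    have KI : 0 < (a^(e+2) - a) * (b^(e+3) - 1) - (b^(e+2) - b) * (a^(e+3) - 1) := by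
      have h3 : 0 < (b - a) * (a*b - 1) *
          ((∑ i ∈ Finset.range (e+2), (a*b) ^ i) -
            ∑ i ∈ Finset.range (e+2), b ^ i * a ^ (e+1-i)) :=
        mul_pos (mul_pos (sub_pos.2 hab) (sub_pos.2 hab1)) (sub_pos.2 QS)
      have hid : (a^(e+2) - a) * (b^(e+3) - 1) - (b^(e+2) - b) * (a^(e+3) - 1)
          = (b - a) * (a*b - 1) *
            ((∑ i ∈ Finset.range (e+2), (a*b) ^ i) -
              ∑ i ∈ Finset.range (e+2), b ^ i * a ^ (e+1-i)) := by
        linear_combination (a*b - 1) * hg2 - (b - a) * hg1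
      rw [hid]
      exact h3
    have hzero : (q' : ℝ) * ((a^(e+2) - a) * (b^(e+3) - 1) - (b^(e+2) - b) * (a^(e+3) - 1)) = 0 := by
      linear_combination (a^(e+3) - 1) * Pb - (b^(e+3) - 1) * Pa
    linarith [mul_pos hq'pos KI]
  refine ⟨x0, ⟨hx0gt, hEx0⟩, ?_⟩
  rintro y ⟨hy, hEy⟩
  by_contra hne
  have Py := (hE y).mp hEy
  have Px0 := (hE x0).mp hEx0
  rcases lt_or_gt_of_ne hne with h | h
  · exact key y x0 hy hx0gt h Py Px0
  · exact key x0 y hx0gt hy h Px0 Py
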